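/- Let G be a finite simple chordal graph that is not complete. Then there exists a threshold graph T on the same vertex set as G such that, for every i ≥ 1, the number of cliques of T with exactly i vertices equals the number of cliques of G with exactly i vertices; in particular G and T have the same clique vector and the same b-vector. -/

import Mathlib

open Finset

/-- `G` is chordal: every cycle of length at least 4 has a chord, i.e. an edge
joining two non-consecutive vertices of the cycle. -/
def IsChordal {V : Type*} (G : SimpleGraph V) : Prop :=
  ∀ (n : ℕ), 4 ≤ n → ∀ f : ZMod n → V, Function.Injective f →
    (∀ i : ZMod n, G.Adj (f i) (f (i + 1))) →
    ∃ i j : ZMod n, i ≠ j ∧ i + 1 ≠ j ∧ j + 1 ≠ i ∧ G.Adj (f i) (f j)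

/-- The number of cliques of `G` with exactly `i` vertices. -/
noncomputable def cliqueCount {V : Type*} [Fintype V] (G : SimpleGraph V) (i : ℕ) : ℕ :=
  {s : Finset V | G.IsNClique i s}.ncard

/-- `W(G - Y)`: the number of connected components of the subgraph of `G` induced on the
complement of `Y`. -/
noncomputable def numComponents {V : Type*} [Fintype V] [DecidableEq V] (G : SimpleGraph V)
    (Y : Finset V) : ℕ :=
  Nat.card (G.induce (↑(Yᶜ) : Set V)).ConnectedComponent

/-- A vertex-cut of `G`: a set of vertices whose removal disconnects `G`. -/
def IsVertexCut {V : Type*} [Fintype V] [DecidableEq V] (G : SimpleGraph V) (Y : Finset V) :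
    Prop :=
  ¬ (G.induce (↑(Yᶜ) : Set V)).Connected

/-- The vertex connectivity `κ(G)`: the minimum cardinality of a vertex-cut. -/
noncomputable def vertexConnectivity {V : Type*} [Fintype V] [DecidableEq V]
    (G : SimpleGraph V) : ℕ :=
  sInf {k | ∃ Y : Finset V, IsVertexCut G Y ∧ Y.card = k}

/-- `s` is a maximal clique of `G`. -/
def IsMaxCliqueOf {V : Type*} (G : SimpleGraph V) (s : Finset V) : Prop :=
  G.IsClique (↑s : Set V) ∧ ∀ t : Finset V, G.IsClique (↑t : Set V) → s ⊆ t → s = t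

/-- A dominating `i`-clique of `G`: a set of `i`-cliques such that every maximal clique of
order at least `i` contains some member of the set. -/
def IsDominatingCliqueSet {V : Type*} (G : SimpleGraph V) (i : ℕ)
    (D : Finset (Finset V)) : Prop :=
  (∀ s ∈ D, G.IsNClique i s) ∧
    ∀ t : Finset V, IsMaxCliqueOf G t → i ≤ t.card → ∃ s ∈ D, s ⊆ t

/-- `d_i(G)`: the minimum cardinality of a dominating `i`-clique of `G`. -/
noncomputable def domNum {V : Type*} (G : SimpleGraph V) (i : ℕ) : ℕ :=
  sInf {k | ∃ D : Finset (Finset V), IsDominatingCliqueSet G i D ∧ D.card = k}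

/-- `κ̃(G)`: the maximum cardinality of the intersection of a pair of distinct maximal
cliques of `G`. -/
noncomputable def kappaTilde {V : Type*} [DecidableEq V] (G : SimpleGraph V) : ℕ :=
  sSup {k | ∃ C C' : Finset V, IsMaxCliqueOf G C ∧ IsMaxCliqueOf G C' ∧ C ≠ C' ∧
    (C ∩ C').card = k}

/-- `G` restricted to the vertex set `s` is a threshold graph: it can be built from a
one-vertex graph by repeatedly adding either an isolated vertex or a vertex adjacent to
all existing vertices. -/
inductive IsThresholdOn {V : Type*} [DecidableEq V] (G : SimpleGraph V) : Finset V → Prop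
  | single (v : V) : IsThresholdOn G {v}
  | isolated (s : Finset V) (v : V) (hv : v ∉ s) (hs : IsThresholdOn G s)
      (hiso : ∀ u ∈ s, ¬ G.Adj v u) : IsThresholdOn G (insert v s)
  | dominating (s : Finset V) (v : V) (hv : v ∉ s) (hs : IsThresholdOn G s)
      (hdom : ∀ u ∈ s, G.Adj v u) : IsThresholdOn G (insert v s)

/-- `G` is a threshold graph. -/
def IsThreshold {V : Type*} [Fintype V] [DecidableEq V] (G : SimpleGraph V) : Prop :=
  IsThresholdOn G Finset.univ

/-- `|C_i(G)|`: the number of maximal cliques of `G` with exactly `i` vertices. -/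
noncomputable def maxCliqueCount {V : Type*} [Fintype V] (G : SimpleGraph V) (i : ℕ) : ℕ :=
  {s : Finset V | IsMaxCliqueOf G s ∧ s.card = i}.ncard

/-- `s` is a maximal clique of `G` among the cliques contained in `W`, i.e. a facet of the
restriction of the clique complex of `G` to `W`. -/
def IsMaxCliqueWithin {V : Type*} (G : SimpleGraph V) (W : Finset V) (s : Finset V) : Prop :=
  s ⊆ W ∧ G.IsClique (↑s : Set V) ∧
    ∀ t : Finset V, t ⊆ W → G.IsClique (↑t : Set V) → s ⊆ t → s = t

/-- The restriction of the clique complex of `G` to `W` is pure: all its facets have the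
same cardinality. -/
def PureOn {V : Type*} (G : SimpleGraph V) (W : Finset V) : Prop :=
  ∀ s t : Finset V, IsMaxCliqueWithin G W s → IsMaxCliqueWithin G W t → s.card = t.card


namespace Stmt10Aux
open SimpleGraph
variable {V : Type*} [DecidableEq V]


def Gr (G : SimpleGraph V) (s : Finset V) : SimpleGraph V where
  Adj x y := G.Adj x y ∧ x ∈ s ∧ y ∈ s
  symm := ⟨fun x y ⟨h, hx, hy⟩ => ⟨h.symm, hy, hx⟩⟩
  loopless := ⟨fun x ⟨h, _, _⟩ => G.irrefl h⟩

lemma Gr_adj {G : SimpleGraph V} {s : Finset V} {x y : V} :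
    (Gr G s).Adj x y ↔ G.Adj x y ∧ x ∈ s ∧ y ∈ s := Iff.rfl

lemma reach_helper {G : SimpleGraph V} {t : Finset V} {x : V} :
    ∀ {a b : V}, (Gr G (insert x t)).Walk a b → a ∈ t → ¬ (Gr G t).Reachable a b →
    ∃ y ∈ t, G.Adj x y ∧ (Gr G t).Reachable a y := by
  intro a b w
  induction w with
  | nil => intro _ hr; exact absurd (Reachable.refl _) hr
  | cons h w ih =>
    rename_i a c b
    intro ha hr
    obtain ⟨hadj, _, hc⟩ := h
    by_cases hcx : c = x
    · exact ⟨a, ha, hcx ▸ hadj.symm, Reachable.refl _⟩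
    · have hct : c ∈ t := by
        rcases Finset.mem_insert.mp hc with h1 | h1
        · exact absurd h1 hcx
        · exact h1
      have hac : (Gr G t).Reachable a c := Adj.reachable ⟨hadj, ha, hct⟩
      have hncb : ¬ (Gr G t).Reachable c b := fun h => hr (hac.trans h)
      obtain ⟨y, hy, hxy, hcy⟩ := ih hct hncb
      exact ⟨y, hy, hxy, hac.trans hcy⟩

structure PF (G : SimpleGraph V) (x y : V) (A : Finset V) (r : ℕ) (p : ℕ → V) : Prop where
  h0 : p 0 = x
  hr : p r = y
  adj : ∀ i, i < r → G.Adj (p i) (p (i+1))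
  int : ∀ i, 0 < i → i < r → p i ∈ A

lemma PF.shortcut {G : SimpleGraph V} {x y : V} {A : Finset V} {r : ℕ} {p : ℕ → V}
    (h : PF G x y A r p) {i j : ℕ} (hij : i < j) (hj : j ≤ r)
    (hadj : G.Adj (p i) (p j)) :
    PF G x y A (r - j + i + 1) (fun k => if k ≤ i then p k else p (k + j - i - 1)) := by
  have hir : i < r := lt_of_lt_of_le hij hj
  constructor
  · simp [h.h0]
  · have h1 : ¬ (r - j + i + 1 ≤ i) := by omega
    simp only [h1, if_false]
    have : r - j + i + 1 + j - i - 1 = r := by omega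
    rw [this, h.hr]
  · intro k hk
    by_cases hki : k + 1 ≤ i
    · simp only [show k ≤ i by omega, if_true, hki, if_true]
      exact h.adj k (by omega)
    · by_cases hki2 : k ≤ i
      · have : k = i := by omega
        subst this
        simp only [le_refl, if_true, hki, if_false]
        have : k + 1 + j - k - 1 = j := by omega
        rw [this]; exact hadj
      · simp only [hki2, if_false, hki, if_false]
        have h2 : k + 1 + j - i - 1 = (k + j - i - 1) + 1 := by omega
        rw [h2]
        exact h.adj _ (by omega)
  · intro k hk0 hkr
    by_cases hki : k ≤ i
    · simp only [hki, if_true]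
      exact h.int k hk0 (by omega)
    · simp only [hki, if_false]
      exact h.int _ (by omega) (by omega)

lemma exists_min_path {G : SimpleGraph V} {x y : V} {A : Finset V}
    (hne : ∃ r, 2 ≤ r ∧ ∃ p, PF G x y A r p)
    (hx : x ∉ A) (hy : y ∉ A) (hxy : ¬ G.Adj x y) (hxyne : x ≠ y) :
    ∃ r p, 2 ≤ r ∧ PF G x y A r p ∧
      (∀ i j, i < j → j ≤ r → p i ≠ p j) ∧
      (∀ i j, i + 2 ≤ j → j ≤ r → (0 < i ∨ j < r) → ¬ G.Adj (p i) (p j)) := by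
  classical
  set K := {r | 2 ≤ r ∧ ∃ p, PF G x y A r p} with hK
  have hKne : K.Nonempty := hne
  have hmem := Nat.sInf_mem hKne
  set r := sInf K with hr
  obtain ⟨hr2, p, hp⟩ := hmem
  have hmin : ∀ r', 2 ≤ r' → r' < r → ∀ q, ¬ PF G x y A r' q := by
    intro r' h2 hlt q hq
    have : sInf K ≤ r' := Nat.sInf_le ⟨h2, q, hq⟩
    omega
  have hchord : ∀ i j, i + 2 ≤ j → j ≤ r → (0 < i ∨ j < r) → ¬ G.Adj (p i) (p j) := by
    intro i j hij hj hcase hadj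
    have := hp.shortcut (show i < j by omega) hj hadj
    exact hmin _ (by omega) (by omega) _ this
  refine ⟨r, p, hr2, hp, ?_, hchord⟩
  intro i j hij hj heq
  rcases Nat.lt_or_ge j (i + 2) with hj2 | hj2
  · -- j = i + 1
    have : j = i + 1 := by omega
    subst this
    exact G.irrefl (heq ▸ hp.adj i (by omega))
  · by_cases hjr : j = r
    · subst hjr
      rcases Nat.eq_zero_or_pos i with h0 | h0
      · subst h0
        rw [hp.h0, hp.hr] at heq
        exact hxyne heq
      · apply hy
        have hint := hp.int i h0 (by omega)
        rwa [heq, hp.hr] at hint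
    · have hjr' : j < r := by omega
      have hadj : G.Adj (p i) (p (j+1)) := by
        rw [heq]; exact hp.adj j hjr'
      have hsc := hp.shortcut (show i < j + 1 by omega) (by omega) hadj
      have h2 : 2 ≤ r - (j+1) + i + 1 := by
        rcases Nat.eq_zero_or_pos i with h0 | h0
        · by_cases hjj : j = r - 1
          · exfalso
            apply hx
            have hint := hp.int j (by omega) (by omega)
            rwa [← heq, h0, hp.h0] at hint
          · omega
        · omega
      exact hmin _ h2 (by omega) _ hsc


lemma PF_of_walk {G : SimpleGraph V} {t A : Finset V} {u v x y : V}
    (w : (Gr G t).Walk u v) (hA : ∀ z ∈ w.support, z ∈ A)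
    (hxu : G.Adj x u) (hvy : G.Adj v y) :
    ∃ r, 2 ≤ r ∧ ∃ p, PF G x y A r p := by
  refine ⟨w.length + 2, by omega,
    fun i => if i = 0 then x else if i = w.length + 2 then y else w.getVert (i-1), ?_⟩
  constructor
  · simp
  · simp
  · intro i hi
    rcases Nat.eq_zero_or_pos i with h0 | h0
    · subst h0
      simp only [if_pos rfl, if_neg (by omega : (1:ℕ) ≠ 0), if_neg (by omega : (1:ℕ) ≠ w.length + 2)]
      simpa [w.getVert_zero] using hxu
    · by_cases hlast : i = w.length + 1
      · subst hlast
        simp only [if_neg (by omega : w.length + 1 ≠ 0), if_neg (by omega : w.length + 1 ≠ w.length + 2),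
          if_neg (by omega : w.length + 1 + 1 ≠ 0), if_pos (by omega : w.length + 1 + 1 = w.length + 2)]
        have : w.getVert (w.length + 1 - 1) = v := by
          simpa using w.getVert_of_length_le (by omega)
        rw [this]; exact hvy
      · simp only [if_neg (by omega : i ≠ 0), if_neg (by omega : i ≠ w.length + 2),
          if_neg (by omega : i + 1 ≠ 0), if_neg (by omega : i + 1 ≠ w.length + 2)]
        have h2 : i + 1 - 1 = (i - 1) + 1 := by omega
        rw [h2]
        exact (w.adj_getVert_succ (i := i - 1) (by omega)).1
  · intro i h0 hi
    simp only [if_neg (by omega : i ≠ 0), if_neg (by omega : i ≠ w.length + 2)]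
    exact hA _ (Walk.mem_support_iff_exists_getVert.mpr ⟨i - 1, rfl, by omega⟩)


lemma no_two_paths {G : SimpleGraph V} (hch : IsChordal G) {x y : V} {A B : Finset V}
    (hAB : ∀ u ∈ A, ∀ w ∈ B, ¬ G.Adj u w) (hABd : ∀ u ∈ A, u ∉ B)
    (hxA : x ∉ A) (hxB : x ∉ B) (hyA : y ∉ A) (hyB : y ∉ B)
    (hxy : ¬ G.Adj x y) (hne : x ≠ y)
    (hPA : ∃ r, 2 ≤ r ∧ ∃ p, PF G x y A r p)
    (hPB : ∃ r, 2 ≤ r ∧ ∃ p, PF G y x B r p) : False := by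
  obtain ⟨r, p, hr2, hp, injA, chordA⟩ := exists_min_path hPA hxA hyA hxy hne
  obtain ⟨s, q, hs2, hq, injB, chordB⟩ :=
    exists_min_path hPB hyB hxB (fun h => hxy h.symm) hne.symm
  set n := r + s with hn
  have hn4 : 4 ≤ n := by omega
  set g : ℕ → V := fun k => if k < r then p k else q (k - r) with hg
  have hg0 : g 0 = x := by simp only [hg, if_pos (by omega : 0 < r)]; exact hp.h0
  have hgr : g r = y := by simp only [hg, if_neg (lt_irrefl r), Nat.sub_self]; exact hq.h0
  have hgp : ∀ k, k < r → g k = p k := fun k hk => by simp only [hg, if_pos hk]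
  have hgq : ∀ k, r ≤ k → g k = q (k - r) := fun k hk => by
    simp only [hg, if_neg (by omega : ¬ k < r)]
  have hgr' : g r = q 0 := by rw [hgr, hq.h0]
  have hintA : ∀ k, 0 < k → k < r → g k ∈ A := fun k h1 h2 => by
    rw [hgp k h2]; exact hp.int k h1 h2
  have hintB : ∀ k, r < k → k < n → g k ∈ B := fun k h1 h2 => by
    rw [hgq k (le_of_lt h1)]; exact hq.int (k - r) (by omega) (by omega)
  -- injectivity of g on [0, n)
  have ginj : ∀ a b, a < b → b < n → g a ≠ g b := by
    intro a b hab hbn heq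
    rcases lt_trichotomy b r with hbr | hbr | hbr
    · rw [hgp a (by omega), hgp b hbr] at heq
      exact injA a b hab (by omega) heq
    · subst hbr
      rcases Nat.eq_zero_or_pos a with h0 | h0
      · subst h0; rw [hg0, hgr] at heq; exact hne heq
      · rw [hgp a hab, hgr, ← hp.hr] at heq
        exact injA a b hab le_rfl heq
    · have ht : 1 ≤ b - r ∧ b - r ≤ s - 1 := by omega
      rcases lt_trichotomy a r with har | har | har
      · rcases Nat.eq_zero_or_pos a with h0 | h0
        · subst h0
          rw [hg0, hgq b (by omega), ← hq.hr] at heq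
          exact injB (b - r) s (by omega) le_rfl heq.symm
        · exact hABd _ (hintA a h0 har) (heq ▸ hintB b hbr hbn)
      · rw [har, hgr', hgq b (by omega)] at heq
        exact injB 0 (b - r) (by omega) (by omega) heq
      · rw [hgq a (by omega), hgq b (by omega)] at heq
        exact injB (a - r) (b - r) (by omega) (by omega) heq
  -- adjacency along g
  have gadj : ∀ k, k < n - 1 → G.Adj (g k) (g (k + 1)) := by
    intro k hk
    rcases lt_trichotomy (k + 1) r with h1 | h1 | h1
    · rw [hgp k (by omega), hgp (k+1) h1]; exact hp.adj k (by omega)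
    · rw [hgp k (by omega), h1, hgr, ← hp.hr]
      have := hp.adj k (by omega)
      rwa [h1] at this
    · rw [hgq k (by omega), hgq (k+1) (by omega)]
      have h2 : k + 1 - r = (k - r) + 1 := by omega
      rw [h2]
      exact hq.adj (k - r) (by omega)
  have gwrap : G.Adj (g (n - 1)) (g 0) := by
    rw [hg0, hgq (n-1) (by omega), ← hq.hr]
    have h2 : n - 1 - r = s - 1 := by omega
    rw [h2]
    have := hq.adj (s-1) (by omega)
    have h3 : s - 1 + 1 = s := by omega
    rwa [h3] at this
  -- no chords
  have gchord : ∀ a b, a + 2 ≤ b → b < n → ¬(a = 0 ∧ b = n - 1) → ¬ G.Adj (g a) (g b) := by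
    intro a b hab hbn hexc hadj
    rcases lt_trichotomy b r with hbr | hbr | hbr
    · rw [hgp a (by omega), hgp b hbr] at hadj
      exact chordA a b hab (by omega) (Or.inr hbr) hadj
    · subst hbr
      rcases Nat.eq_zero_or_pos a with h0 | h0
      · subst h0; rw [hg0, hgr] at hadj; exact hxy hadj
      · rw [hgp a (by omega), hgr, ← hp.hr] at hadj
        exact chordA a b hab le_rfl (Or.inl h0) hadj
    · have ht : 1 ≤ b - r ∧ b - r ≤ s - 1 := by omega
      rcases lt_trichotomy a r with har | har | har
      · rcases Nat.eq_zero_or_pos a with h0 | h0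
        · subst h0
          have hts : b - r ≤ s - 2 := by
            rcases Nat.lt_or_ge (b - r) (s - 1) with h | h
            · omega
            · exfalso; exact hexc ⟨rfl, by omega⟩
          rw [hg0, hgq b (by omega)] at hadj
          have : G.Adj (q (b - r)) (q s) := by rw [hq.hr]; exact hadj.symm
          exact chordB (b - r) s (by omega) le_rfl (Or.inl (by omega)) this
        · exact hAB _ (hintA a h0 har) _ (hintB b hbr hbn) hadj
      · rw [har, hgr', hgq b (by omega)] at hadj
        exact chordB 0 (b - r) (by omega) (by omega) (Or.inr (by omega)) hadj
      · rw [hgq a (by omega), hgq b (by omega)] at hadj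
        exact chordB (a - r) (b - r) (by omega) (by omega) (Or.inl (by omega)) hadj
  -- build the ZMod cycle
  haveI : NeZero n := ⟨by omega⟩
  haveI : Fact (1 < n) := ⟨by omega⟩
  set f : ZMod n → V := fun i => g i.val with hf
  have hval1 : ∀ i : ZMod n, (i + 1).val = (i.val + 1) % n := by
    intro i; rw [ZMod.val_add, ZMod.val_one]
  have finj : Function.Injective f := by
    intro i j hij
    rcases lt_trichotomy i.val j.val with h | h | h
    · exact absurd hij (ginj _ _ h (ZMod.val_lt j))
    · exact ZMod.val_injective n h
    · exact absurd hij.symm (ginj _ _ h (ZMod.val_lt i))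
  have fadj : ∀ i : ZMod n, G.Adj (f i) (f (i + 1)) := by
    intro i
    simp only [hf]
    rw [hval1 i]
    rcases Nat.lt_or_ge i.val (n - 1) with h | h
    · rw [Nat.mod_eq_of_lt (by omega)]
      exact gadj i.val h
    · have : i.val = n - 1 := by have := ZMod.val_lt i; omega
      rw [this]
      have h2 : (n - 1 + 1) % n = 0 := by
        have : n - 1 + 1 = n := by omega
        rw [this, Nat.mod_self]
      rw [h2]
      exact gwrap
  obtain ⟨i, j, hij, hij1, hji1, hadj⟩ := hch n hn4 f finj fadj
  -- translate the chord to a contradiction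
  have key : ∀ a b : ZMod n, a.val < b.val → (a + 1 ≠ b) → (b + 1 ≠ a) → G.Adj (f a) (f b) → False := by
    intro a b hab h1 h2 hadj
    have hbn : b.val < n := ZMod.val_lt b
    have hstep : a.val + 1 ≠ b.val := by
      intro h
      apply h1
      apply ZMod.val_injective n
      rw [hval1 a, Nat.mod_eq_of_lt (by omega), h]
    have hexc : ¬ (a.val = 0 ∧ b.val = n - 1) := by
      rintro ⟨h0, hlast⟩
      apply h2
      apply ZMod.val_injective n
      rw [hval1 b, hlast, h0]
      have : n - 1 + 1 = n := by omega
      rw [this, Nat.mod_self]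
    exact gchord a.val b.val (by omega) hbn hexc hadj
  rcases lt_trichotomy i.val j.val with h | h | h
  · exact key i j h hij1 hji1 hadj
  · exact hij (ZMod.val_injective n h)
  · exact key j i h hji1 hij1 hadj.symm


def SimpIn (G : SimpleGraph V) (s : Finset V) (v : V) : Prop :=
  ∀ x ∈ s, ∀ y ∈ s, G.Adj v x → G.Adj v y → x ≠ y → G.Adj x y

def CliqueOn (G : SimpleGraph V) (s : Finset V) : Prop :=
  ∀ x ∈ s, ∀ y ∈ s, x ≠ y → G.Adj x y

lemma Gr_reach_mem {G : SimpleGraph V} {t : Finset V} {u z : V}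
    (h : (Gr G t).Reachable u z) (hu : u ∈ t) : z ∈ t := by
  obtain ⟨w⟩ := h
  induction w with
  | nil => exact hu
  | cons h w ih => exact ih h.2.2

lemma no_small_walk {G : SimpleGraph V} {t : Finset V} {a b : V}
    (hab : a ≠ b) (hnadj : ¬ G.Adj a b) (ht : t ⊆ {a, b}) :
    ¬ (Gr G t).Reachable a b := by
  intro h
  obtain ⟨w⟩ := h
  cases w with
  | nil => exact hab rfl
  | @cons _ c _ h w =>
    have hc : c ∈ ({a, b} : Finset V) := ht h.2.2
    rcases Finset.mem_insert.mp hc with h1 | h1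
    · subst h1; exact G.irrefl h.1
    · rw [Finset.mem_singleton] at h1
      subst h1; exact hnadj h.1

lemma side_simp {G : SimpleGraph V} {s : Finset V} {a : V} {A S : Finset V}
    (haA : a ∈ A) (hsub : A ∪ S ⊆ s) (hproper : A ∪ S ⊂ s)
    (hSclq : CliqueOn G S)
    (hnbr : ∀ v ∈ A, ∀ u ∈ s, G.Adj v u → u ∈ A ∪ S)
    (IH : ∀ t ⊂ s, t.Nonempty → CliqueOn G t ∨
      ∃ v ∈ t, ∃ w ∈ t, v ≠ w ∧ ¬ G.Adj v w ∧ SimpIn G t v ∧ SimpIn G t w) :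
    ∃ v ∈ A, SimpIn G s v := by
  rcases IH (A ∪ S) hproper ⟨a, Finset.mem_union_left _ haA⟩ with hclq | ⟨v, hv, w, hw, hvw, hnadj, hsv, hsw⟩
  · refine ⟨a, haA, ?_⟩
    intro x hx y hy hax hay hxy
    exact hclq x (hnbr a haA x hx hax) y (hnbr a haA y hy hay) hxy
  · have key : ∀ u ∈ A ∪ S, u ∉ S → SimpIn G (A ∪ S) u → ∃ v ∈ A, SimpIn G s v := by
      intro u hu huS hsimp
      have huA : u ∈ A := by
        rcases Finset.mem_union.mp hu with h | h
        · exact h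
        · exact absurd h huS
      refine ⟨u, huA, ?_⟩
      intro x hx y hy hux huy hxy
      exact hsimp x (hnbr u huA x hx hux) y (hnbr u huA y hy huy) hux huy hxy
    by_cases hvS : v ∈ S
    · by_cases hwS : w ∈ S
      · exact absurd (hSclq v hvS w hwS hvw) hnadj
      · exact key w hw hwS hsw
    · exact key v hv hvS hsv

lemma dirac {G : SimpleGraph V} (hch : IsChordal G) :
    ∀ s : Finset V, s.Nonempty → CliqueOn G s ∨
      ∃ v ∈ s, ∃ w ∈ s, v ≠ w ∧ ¬ G.Adj v w ∧ SimpIn G s v ∧ SimpIn G s w := by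
  intro s
  induction s using Finset.strongInduction with
  | _ s IH =>
  intro _
  by_cases hclq : CliqueOn G s
  · exact Or.inl hclq
  right
  simp only [CliqueOn, not_forall] at hclq
  obtain ⟨a, ha, b, hb, hab, hnadj⟩ := hclq
  classical
  -- minimal separator
  set Seps := ((s.erase a).erase b).powerset.filter
    (fun S => ¬ (Gr G (s \ S)).Reachable a b) with hSeps
  have hS0 : (s.erase a).erase b ∈ Seps := by
    refine Finset.mem_filter.mpr ⟨Finset.mem_powerset.mpr le_rfl, ?_⟩
    apply no_small_walk hab hnadj
    intro v hv
    rw [Finset.mem_sdiff] at hv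
    by_cases h1 : v = a
    · simp [h1]
    · by_cases h2 : v = b
      · simp [h2]
      · exact absurd (Finset.mem_erase.mpr ⟨h2, Finset.mem_erase.mpr ⟨h1, hv.1⟩⟩) hv.2
  obtain ⟨S, hSmem, hSmin⟩ := Finset.exists_min_image Seps Finset.card ⟨_, hS0⟩
  rw [hSeps, Finset.mem_filter, Finset.mem_powerset] at hSmem
  obtain ⟨hSsub, hSr⟩ := hSmem
  have hSs : S ⊆ s := fun x hx => Finset.mem_of_mem_erase (Finset.mem_of_mem_erase (hSsub hx))
  have haS : a ∉ S := fun h => (Finset.mem_erase.mp (Finset.mem_of_mem_erase (hSsub h))).1 rfl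
  have hbS : b ∉ S := fun h => (Finset.mem_erase.mp (hSsub h)).1 rfl
  set A := (s \ S).filter (fun u => (Gr G (s \ S)).Reachable a u) with hA
  set B := (s \ S).filter (fun u => (Gr G (s \ S)).Reachable b u) with hB
  have haA : a ∈ A := Finset.mem_filter.mpr ⟨Finset.mem_sdiff.mpr ⟨ha, haS⟩, Reachable.refl _⟩
  have hbB : b ∈ B := Finset.mem_filter.mpr ⟨Finset.mem_sdiff.mpr ⟨hb, hbS⟩, Reachable.refl _⟩
  have hAmem : ∀ u ∈ A, u ∈ s \ S ∧ (Gr G (s \ S)).Reachable a u := fun u hu =>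
    ⟨(Finset.mem_filter.mp hu).1, (Finset.mem_filter.mp hu).2⟩
  have hBmem : ∀ u ∈ B, u ∈ s \ S ∧ (Gr G (s \ S)).Reachable b u := fun u hu =>
    ⟨(Finset.mem_filter.mp hu).1, (Finset.mem_filter.mp hu).2⟩
  have hdisj : ∀ u ∈ A, u ∉ B := by
    intro u hu hub
    exact hSr (((hAmem u hu).2).trans ((hBmem u hub).2).symm)
  have hAB : ∀ u ∈ A, ∀ w ∈ B, ¬ G.Adj u w := by
    intro u hu w hw hadj
    apply hSr
    have : (Gr G (s \ S)).Adj u w := ⟨hadj, (hAmem u hu).1, (hBmem w hw).1⟩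
    exact (((hAmem u hu).2).trans this.reachable).trans ((hBmem w hw).2).symm
  have hbA : b ∉ A := fun h => hSr (hAmem b h).2
  have haB : a ∉ B := fun h => hSr ((hBmem a h).2).symm
  -- every x ∈ S has neighbours in A and in B
  have hins : ∀ x ∈ S, s \ S.erase x = insert x (s \ S) := by
    intro x hx
    ext v
    simp only [Finset.mem_sdiff, Finset.mem_erase, Finset.mem_insert]
    constructor
    · rintro ⟨hvs, hv⟩
      by_cases h1 : v = x
      · exact Or.inl h1
      · exact Or.inr ⟨hvs, fun h => hv ⟨h1, h⟩⟩
    · rintro (h1 | ⟨h1, h2⟩)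
      · exact ⟨h1 ▸ hSs hx, fun h => h.1 h1⟩
      · exact ⟨h1, fun h => h2 h.2⟩
  have hreachx : ∀ x ∈ S, (Gr G (s \ S.erase x)).Reachable a b := by
    intro x hx
    by_contra hr
    have hmem : S.erase x ∈ Seps := by
      refine Finset.mem_filter.mpr ⟨Finset.mem_powerset.mpr ?_, hr⟩
      exact (Finset.erase_subset _ _).trans hSsub
    have := hSmin _ hmem
    have hlt : (S.erase x).card < S.card := Finset.card_erase_lt_of_mem hx
    omega
  have hnbrA : ∀ x ∈ S, ∃ y ∈ A, G.Adj x y := by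
    intro x hx
    have := hreachx x hx
    rw [hins x hx] at this
    obtain ⟨w⟩ := this
    obtain ⟨y, hy, hxy, hry⟩ := reach_helper w (Finset.mem_sdiff.mpr ⟨ha, haS⟩) hSr
    exact ⟨y, Finset.mem_filter.mpr ⟨hy, hry⟩, hxy⟩
  have hnbrB : ∀ x ∈ S, ∃ y ∈ B, G.Adj x y := by
    intro x hx
    have := (hreachx x hx).symm
    rw [hins x hx] at this
    obtain ⟨w⟩ := this
    obtain ⟨y, hy, hxy, hry⟩ := reach_helper w (Finset.mem_sdiff.mpr ⟨hb, hbS⟩)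
      (fun h => hSr h.symm)
    exact ⟨y, Finset.mem_filter.mpr ⟨hy, hry⟩, hxy⟩
  -- reachable vertices stay in A
  have hreachA : ∀ u ∈ A, ∀ z, (Gr G (s \ S)).Reachable u z → z ∈ A := by
    intro u hu z hz
    exact Finset.mem_filter.mpr ⟨Gr_reach_mem hz (hAmem u hu).1, ((hAmem u hu).2).trans hz⟩
  have hreachB : ∀ u ∈ B, ∀ z, (Gr G (s \ S)).Reachable u z → z ∈ B := by
    intro u hu z hz
    exact Finset.mem_filter.mpr ⟨Gr_reach_mem hz (hBmem u hu).1, ((hBmem u hu).2).trans hz⟩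
  -- S is a clique
  have hSclq : CliqueOn G S := by
    intro x hx y hy hxy
    by_contra hnadj2
    obtain ⟨xA, hxA, hadjxA⟩ := hnbrA x hx
    obtain ⟨yA, hyA, hadjyA⟩ := hnbrA y hy
    obtain ⟨xB, hxB, hadjxB⟩ := hnbrB x hx
    obtain ⟨yB, hyB, hadjyB⟩ := hnbrB y hy
    have hxSA : x ∉ A := fun h => (Finset.mem_sdiff.mp (hAmem x h).1).2 hx
    have hySA : y ∉ A := fun h => (Finset.mem_sdiff.mp (hAmem y h).1).2 hy
    have hxSB : x ∉ B := fun h => (Finset.mem_sdiff.mp (hBmem x h).1).2 hx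
    have hySB : y ∉ B := fun h => (Finset.mem_sdiff.mp (hBmem y h).1).2 hy
    apply no_two_paths hch hAB hdisj hxSA hxSB hySA hySB hnadj2 hxy
    · -- path from x to y through A
      have hr : (Gr G (s \ S)).Reachable xA yA :=
        ((hAmem xA hxA).2).symm.trans ((hAmem yA hyA).2)
      obtain ⟨w⟩ := hr
      apply PF_of_walk w ?_ hadjxA hadjyA.symm
      intro z hz
      exact hreachA xA hxA z (w.takeUntil z hz).reachable
    · -- path from y to x through B
      have hr : (Gr G (s \ S)).Reachable yB xB :=
        ((hBmem yB hyB).2).symm.trans ((hBmem xB hxB).2)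
      obtain ⟨w⟩ := hr
      apply PF_of_walk w ?_ hadjyB hadjxB.symm
      intro z hz
      exact hreachB yB hyB z (w.takeUntil z hz).reachable
  -- assemble the two sides
  have hnbrcl : ∀ (C : Finset V), (∀ u ∈ C, u ∈ s \ S ∧ (Gr G (s \ S)).Reachable a u) → True := fun _ _ => trivial
  have hsubA : A ∪ S ⊆ s := by
    intro u hu
    rcases Finset.mem_union.mp hu with h | h
    · exact (Finset.mem_sdiff.mp (hAmem u h).1).1
    · exact hSs h
  have hsubB : B ∪ S ⊆ s := by
    intro u hu
    rcases Finset.mem_union.mp hu with h | h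
    · exact (Finset.mem_sdiff.mp (hBmem u h).1).1
    · exact hSs h
  have hpropA : A ∪ S ⊂ s := by
    refine Finset.ssubset_iff_of_subset hsubA |>.mpr ⟨b, hb, ?_⟩
    intro h
    rcases Finset.mem_union.mp h with h | h
    · exact hbA h
    · exact hbS h
  have hpropB : B ∪ S ⊂ s := by
    refine Finset.ssubset_iff_of_subset hsubB |>.mpr ⟨a, ha, ?_⟩
    intro h
    rcases Finset.mem_union.mp h with h | h
    · exact haB h
    · exact haS h
  have hnbrclA : ∀ v ∈ A, ∀ u ∈ s, G.Adj v u → u ∈ A ∪ S := by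
    intro v hv u hu hadj
    by_cases huS : u ∈ S
    · exact Finset.mem_union_right _ huS
    · refine Finset.mem_union_left _ (hreachA v hv u ?_)
      exact Adj.reachable ⟨hadj, (hAmem v hv).1, Finset.mem_sdiff.mpr ⟨hu, huS⟩⟩
  have hnbrclB : ∀ v ∈ B, ∀ u ∈ s, G.Adj v u → u ∈ B ∪ S := by
    intro v hv u hu hadj
    by_cases huS : u ∈ S
    · exact Finset.mem_union_right _ huS
    · refine Finset.mem_union_left _ (hreachB v hv u ?_)
      exact Adj.reachable ⟨hadj, (hBmem v hv).1, Finset.mem_sdiff.mpr ⟨hu, huS⟩⟩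
  obtain ⟨v, hvA, hsv⟩ := side_simp haA hsubA hpropA hSclq hnbrclA IH
  obtain ⟨w, hwB, hsw⟩ := side_simp hbB hsubB hpropB hSclq hnbrclB IH
  refine ⟨v, hsubA (Finset.mem_union_left _ hvA), w, hsubB (Finset.mem_union_left _ hwB),
    ?_, hAB v hvA w hwB, hsv, hsw⟩
  intro h
  exact hdisj v hvA (h ▸ hwB)

noncomputable def nClq (G : SimpleGraph V) (s : Finset V) (i : ℕ) : ℕ :=
  {K : Finset V | K ∈ s.powerset ∧ K.card = i ∧ G.IsClique (↑K : Set V)}.ncard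

lemma nClq_eq_filter {G : SimpleGraph V} {s : Finset V} {i : ℕ}
    [inst : DecidablePred (fun K : Finset V => K.card = i ∧ G.IsClique (↑K : Set V))] :
    nClq G s i =
      (s.powerset.filter (fun K : Finset V => K.card = i ∧ G.IsClique (↑K : Set V))).card := by
  rw [nClq, ← Set.ncard_coe_finset]
  congr 1
  ext K
  simp only [Finset.coe_filter, Set.mem_setOf_eq, Finset.mem_coe]

lemma chordal_counts {G : SimpleGraph V} (hch : IsChordal G) :
    ∀ s : Finset V, ∃ L : Multiset ℕ,
      Multiset.card L = s.card ∧
      (∀ i, 1 ≤ i → nClq G s i = (L.map (fun d => Nat.choose d (i-1))).sum) ∧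
      (∀ d ∈ L, ∀ k, k ≤ d → k ∈ L) ∧
      (∀ d, 1 ≤ d → (∃ K : Finset V, K ⊆ s ∧ K.card = d ∧ G.IsClique (↑K : Set V)) →
        ∃ m ∈ L, d - 1 ≤ m) := by
  classical
  intro s
  induction s using Finset.strongInduction with
  | _ s IH =>
  rcases Finset.eq_empty_or_nonempty s with rfl | hne
  · refine ⟨0, by simp, ?_, by simp, ?_⟩
    · intro i hi
      rw [nClq_eq_filter]
      simp only [Multiset.map_zero, Multiset.sum_zero]
      rw [Finset.card_eq_zero, Finset.filter_eq_empty_iff]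
      intro K hK
      rw [Finset.powerset_empty, Finset.mem_singleton] at hK
      subst hK
      simp only [Finset.card_empty]
      rintro ⟨h0, -⟩
      omega
    · rintro d hd ⟨K, hKs, hKc, -⟩
      rw [Finset.subset_empty] at hKs
      subst hKs
      simp at hKc; omega
  · -- get a simplicial vertex
    have hsimp : ∃ v ∈ s, SimpIn G s v := by
      rcases dirac hch s hne with hclq | ⟨v, hv, _, _, _, _, hsv, _⟩
      · obtain ⟨v, hv⟩ := hne
        exact ⟨v, hv, fun x hx y hy _ _ hxy => hclq x hx y hy hxy⟩
      · exact ⟨v, hv, hsv⟩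
    obtain ⟨v, hv, hsimp⟩ := hsimp
    set s' := s.erase v with hs'
    obtain ⟨L', hL'card, hL'cnt, hL'dc, hL'max⟩ := IH s' (Finset.erase_ssubset hv)
    set N := s'.filter (fun u => G.Adj v u) with hN
    have hNsub : N ⊆ s' := Finset.filter_subset _ _
    have hNmem : ∀ u ∈ N, u ∈ s ∧ u ≠ v ∧ G.Adj v u := by
      intro u hu
      have h1 := Finset.mem_filter.mp hu
      have h2 := Finset.mem_erase.mp h1.1
      exact ⟨h2.2, h2.1, h1.2⟩
    have hNclq : G.IsClique (↑N : Set V) := by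
      rw [SimpleGraph.isClique_iff]
      intro x hx y hy hxy
      obtain ⟨hx1, _, hx2⟩ := hNmem x hx
      obtain ⟨hy1, _, hy2⟩ := hNmem y hy
      exact hsimp x hx1 y hy1 hx2 hy2 hxy
    refine ⟨N.card ::ₘ L', ?_, ?_, ?_, ?_⟩
    · rw [Multiset.card_cons, hL'card, hs', Finset.card_erase_of_mem hv]
      have := Finset.card_pos.mpr hne
      omega
    · -- counting
      intro i hi
      have hsplit : nClq G s i = nClq G s' i +
          (s.powerset.filter (fun K : Finset V => (K.card = i ∧ G.IsClique (↑K : Set V)) ∧ v ∈ K)).card := by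
        rw [nClq_eq_filter, ← Finset.card_filter_add_card_filter_not (p := fun K : Finset V => v ∈ K),
          Nat.add_comm]
        congr 1
        · -- v ∉ K part equals nClq G s' i
          rw [nClq_eq_filter]
          congr 1
          ext K
          simp only [Finset.mem_filter, Finset.mem_powerset, Finset.filter_filter]
          constructor
          · rintro ⟨hKs, hP, hvK⟩
            exact ⟨Finset.subset_erase.mpr ⟨hKs, hvK⟩, hP⟩
          · rintro ⟨hKs, hP⟩
            have := Finset.subset_erase.mp hKs
            exact ⟨this.1, hP, this.2⟩
        · rw [Finset.filter_filter]
      rw [hsplit, hL'cnt i hi, Multiset.map_cons, Multiset.sum_cons, Nat.add_comm]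
      congr 1
      -- the v-containing cliques biject with (i-1)-subsets of N
      rw [← Finset.card_powersetCard (i-1) N]
      refine Finset.card_bij' (fun K _ => K.erase v) (fun J _ => insert v J) ?_ ?_ ?_ ?_
      · intro K hK
        simp only [Finset.mem_filter, Finset.mem_powerset] at hK
        obtain ⟨hKs, ⟨hKc, hKclq⟩, hvK⟩ := hK
        rw [Finset.mem_powersetCard]
        constructor
        · intro u hu
          obtain ⟨huv, huK⟩ := Finset.mem_erase.mp hu
          refine Finset.mem_filter.mpr ⟨Finset.mem_erase.mpr ⟨huv, hKs huK⟩, ?_⟩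
          exact hKclq hvK huK (Ne.symm huv)
        · rw [Finset.card_erase_of_mem hvK, hKc]
      · intro J hJ
        rw [Finset.mem_powersetCard] at hJ
        obtain ⟨hJN, hJc⟩ := hJ
        have hvJ : v ∉ J := fun h => (hNmem v (hJN h)).2.1 rfl
        simp only [Finset.mem_filter, Finset.mem_powerset]
        refine ⟨?_, ⟨?_, ?_⟩, Finset.mem_insert_self _ _⟩
        · intro u hu
          rcases Finset.mem_insert.mp hu with h | h
          · exact h ▸ hv
          · exact (hNmem u (hJN h)).1
        · rw [Finset.card_insert_of_notMem hvJ, hJc]; omega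
        · rw [SimpleGraph.isClique_iff]
          intro x hx y hy hxy
          simp only [Finset.coe_insert, Set.mem_insert_iff, Finset.mem_coe] at hx hy
          rcases hx with rfl | hx
          · rcases hy with rfl | hy
            · exact absurd rfl hxy
            · exact (hNmem y (hJN hy)).2.2
          · rcases hy with rfl | hy
            · exact ((hNmem x (hJN hx)).2.2).symm
            · obtain ⟨hx1, _, hx2⟩ := hNmem x (hJN hx)
              obtain ⟨hy1, _, hy2⟩ := hNmem y (hJN hy)
              exact hsimp x hx1 y hy1 hx2 hy2 hxy
      · intro K hK
        simp only [Finset.mem_filter] at hK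
        exact Finset.insert_erase hK.2.2
      · intro J hJ
        rw [Finset.mem_powersetCard] at hJ
        have hvJ : v ∉ J := fun h => (hNmem v (hJ.1 h)).2.1 rfl
        exact Finset.erase_insert hvJ
    · -- downward closedness
      intro d0 hd0 k hk
      rcases Multiset.mem_cons.mp hd0 with rfl | hd0
      · rcases Nat.eq_or_lt_of_le hk with rfl | hlt
        · exact Multiset.mem_cons_self _ _
        · rcases Nat.eq_zero_or_pos N.card with h0 | h0
          · omega
          · obtain ⟨m, hm, hm2⟩ := hL'max N.card h0 ⟨N, hNsub, rfl, hNclq⟩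
            exact Multiset.mem_cons_of_mem (hL'dc m hm k (by omega))
      · exact Multiset.mem_cons_of_mem (hL'dc d0 hd0 k hk)
    · -- clique size bound
      rintro d hd ⟨K, hKs, hKc, hKclq⟩
      by_cases hvK : v ∈ K
      · refine ⟨N.card, Multiset.mem_cons_self _ _, ?_⟩
        have : K.erase v ⊆ N := by
          intro u hu
          obtain ⟨huv, huK⟩ := Finset.mem_erase.mp hu
          refine Finset.mem_filter.mpr ⟨Finset.mem_erase.mpr ⟨huv, hKs huK⟩, ?_⟩
          exact hKclq hvK huK (Ne.symm huv)
        have := Finset.card_le_card this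
        rw [Finset.card_erase_of_mem hvK, hKc] at this
        omega
      · obtain ⟨m, hm, hm2⟩ := hL'max d hd ⟨K, Finset.subset_erase.mpr ⟨hKs, hvK⟩, hKc, hKclq⟩
        exact ⟨m, Multiset.mem_cons_of_mem hm, hm2⟩



lemma sum_getD (l : List ℕ) (f : ℕ → ℕ) :
    ∑ k ∈ Finset.range l.length, f (l.getD k 0) = (l.map f).sum := by
  induction l with
  | nil => simp
  | cons x l ih =>
    rw [List.length_cons, Finset.sum_range_succ']
    simp only [List.getD_cons_succ, List.getD_cons_zero, List.map_cons, List.sum_cons, ih]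
    omega

lemma count_steps (a : ℕ → ℕ) (n : ℕ)
    (hdesc : ∀ i j, i ≤ j → j < n → a j ≤ a i)
    (hstep : ∀ k, 1 ≤ k → k < n → a (k-1) ≤ a k + 1)
    (hlast : a (n-1) = 0) (j : ℕ) (hj : j < n) :
    ((Finset.range n).filter (fun k => j < k ∧ a k < a (k-1))).card = a j := by
  classical
  have hsplit : (Finset.range n).filter (fun k => j < k ∧ a k < a (k-1)) =
      ((Finset.range n).filter (fun k => j < k)).filter (fun k => a k < a (k-1)) := by
    rw [Finset.filter_filter]
  have h2 : ((((Finset.range n).filter (fun k => j < k ∧ a k < a (k-1))).card : ℤ)) =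
      ∑ k ∈ (Finset.range n).filter (fun k => j < k), ((a (k-1) : ℤ) - a k) := by
    rw [hsplit, Finset.card_filter]
    push_cast
    apply Finset.sum_congr rfl
    intro k hk
    simp only [Finset.mem_filter, Finset.mem_range] at hk
    have hd : a k ≤ a (k-1) := hdesc (k-1) k (by omega) hk.1
    have hs : a (k-1) ≤ a k + 1 := hstep k (by omega) hk.1
    by_cases h : a k < a (k-1)
    · rw [if_pos h]; omega
    · rw [if_neg h]; omega
  have h3 : (Finset.range n).filter (fun k => j < k) =
      (Finset.range (n-1-j)).image (fun t => j + 1 + t) := by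
    ext k
    simp only [Finset.mem_filter, Finset.mem_range, Finset.mem_image]
    constructor
    · rintro ⟨h1, h2⟩; exact ⟨k - j - 1, by omega, by omega⟩
    · rintro ⟨t, ht, rfl⟩; omega
  have h4 : ∑ k ∈ (Finset.range n).filter (fun k => j < k), ((a (k-1) : ℤ) - a k) =
      ∑ t ∈ Finset.range (n-1-j), ((a (j+t) : ℤ) - a (j+t+1)) := by
    rw [h3, Finset.sum_image (by intro x _ y _ h; simp only at h; omega)]
    apply Finset.sum_congr rfl
    intro t _
    have e1 : j + 1 + t - 1 = j + t := by omega
    have e2 : j + 1 + t = j + t + 1 := by omega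
    rw [e1, e2]
  have h5 : ∑ t ∈ Finset.range (n-1-j), ((a (j+t) : ℤ) - a (j+t+1)) =
      (a j : ℤ) - a (j + (n-1-j)) := by
    have h := Finset.sum_range_sub' (fun t => (a (j+t) : ℤ)) (n-1-j)
    simp only [Nat.add_zero] at h
    rw [← h]
    apply Finset.sum_congr rfl
    intro t _
    have e : j + (t+1) = j + t + 1 := by omega
    rw [e]
  have h6 : j + (n-1-j) = n - 1 := by omega
  rw [h4, h5, h6, hlast] at h2
  omega

lemma threshold_exists [Fintype V] (L : Multiset ℕ)
    (hdc : ∀ d ∈ L, ∀ k ≤ d, k ∈ L)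
    (hcard : Fintype.card V = Multiset.card L) (hpos : 0 < Multiset.card L) :
    ∃ T : SimpleGraph V, IsThresholdOn T Finset.univ ∧
      ∀ i, 1 ≤ i → nClq T Finset.univ i = (L.map (fun d => Nat.choose d (i-1))).sum := by
  classical
  set n := Multiset.card L with hn
  set l := Multiset.sort L (· ≤ ·) with hl
  have hlen : l.length = n := Multiset.length_sort _
  have hsort : l.Pairwise (· ≤ ·) := Multiset.pairwise_sort _ _
  have hLl : (l : Multiset ℕ) = L := Multiset.sort_eq _ _
  set a : ℕ → ℕ := fun k => l.getD (n - 1 - k) 0 with ha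
  have hmono : ∀ i j, i ≤ j → j < l.length → l.getD i 0 ≤ l.getD j 0 := by
    intro i j hij hj
    rcases Nat.eq_or_lt_of_le hij with rfl | h
    · exact le_refl _
    · rw [List.getD_eq_getElem l 0 (by omega), List.getD_eq_getElem l 0 hj]
      have := hsort.rel_get_of_lt (a := ⟨i, by omega⟩) (b := ⟨j, hj⟩) h
      simpa using this
  have hdesc : ∀ i j, i ≤ j → j < n → a j ≤ a i := by
    intro i j hij hj
    exact hmono (n-1-j) (n-1-i) (by omega) (by omega)
  have hmem : ∀ k, k < n → a k ∈ L := by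
    intro k hk
    rw [← hLl]
    show a k ∈ (l : Multiset ℕ)
    rw [Multiset.mem_coe, ha]
    simp only
    rw [List.getD_eq_getElem l 0 (by omega)]
    exact List.getElem_mem _
  have hexi : ∀ m ∈ L, ∃ k, k < n ∧ a k = m := by
    intro m hm
    rw [← hLl, Multiset.mem_coe] at hm
    obtain ⟨j, hjl, hj⟩ := List.mem_iff_getElem.mp hm
    refine ⟨n - 1 - j, by omega, ?_⟩
    rw [ha]
    simp only
    have : n - 1 - (n - 1 - j) = j := by omega
    rw [this, List.getD_eq_getElem l 0 (by omega)]
    exact hj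
  have hstep : ∀ k, 1 ≤ k → k < n → a (k-1) ≤ a k + 1 := by
    intro k hk1 hkn
    by_contra hcon
    push_neg at hcon
    have hw : a (k-1) - 1 ∈ L := hdc _ (hmem (k-1) (by omega)) _ (by omega)
    obtain ⟨j, hjn, hj⟩ := hexi _ hw
    rcases Nat.lt_or_ge j k with h | h
    · have := hdesc j (k-1) (by omega) (by omega)
      omega
    · have := hdesc k j h hjn
      omega
  have hlast : a (n-1) = 0 := by
    obtain ⟨d, hd⟩ := Multiset.card_pos_iff_exists_mem.mp hpos
    obtain ⟨j, hjn, hj⟩ := hexi 0 (hdc d hd 0 (Nat.zero_le _))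
    have := hdesc j (n-1) (by omega) (by omega)
    omega
  have hn0 : 0 < n := hpos
  set e : V ≃ Fin n := Fintype.equivFinOfCardEq hcard with he
  set T : SimpleGraph V :=
    { Adj := fun u w => u ≠ w ∧ a (max (e u : ℕ) (e w : ℕ)) < a (max (e u : ℕ) (e w : ℕ) - 1)
      symm := by
        constructor
        intro u w h
        exact ⟨h.1.symm, by rw [Nat.max_comm ((e w : ℕ)) ((e u : ℕ))]; exact h.2⟩
      loopless := ⟨fun u h => h.1 rfl⟩ } with hT
  have hTadj : ∀ u w, (e u : ℕ) < (e w : ℕ) →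
      (T.Adj u w ↔ a (e w : ℕ) < a ((e w : ℕ) - 1)) := by
    intro u w hlt
    constructor
    · intro h
      have := h.2
      rwa [Nat.max_eq_right (le_of_lt hlt)] at this
    · intro h
      refine ⟨?_, ?_⟩
      · intro hc; subst hc; omega
      · rwa [Nat.max_eq_right (le_of_lt hlt)]
  -- threshold structure
  have hfilt : ∀ k : ℕ, k < n →
      IsThresholdOn T (Finset.univ.filter (fun v => (e v : ℕ) ≤ k)) := by
    intro k
    induction k with
    | zero =>
      intro h0
      have heq : Finset.univ.filter (fun v => (e v : ℕ) ≤ 0) = {e.symm ⟨0, hn0⟩} := by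
        ext v
        simp only [Finset.mem_filter, Finset.mem_univ, true_and, Finset.mem_singleton]
        constructor
        · intro h
          have hv0 : (e v : ℕ) = 0 := Nat.le_zero.mp h
          have : e v = ⟨0, hn0⟩ := Fin.ext (by rw [hv0])
          rw [← this, Equiv.symm_apply_apply]
        · rintro rfl
          rw [Equiv.apply_symm_apply]
      rw [heq]
      exact IsThresholdOn.single _
    | succ k ih =>
      intro hk
      have hprev := ih (by omega)
      have hins : Finset.univ.filter (fun v => (e v : ℕ) ≤ k+1) =
          insert (e.symm ⟨k+1, hk⟩) (Finset.univ.filter (fun v => (e v : ℕ) ≤ k)) := by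
        ext v
        simp only [Finset.mem_filter, Finset.mem_univ, true_and, Finset.mem_insert]
        constructor
        · intro h
          rcases Nat.eq_or_lt_of_le h with heq | hlt
          · left
            have : e v = ⟨k+1, hk⟩ := Fin.ext heq
            rw [← this, Equiv.symm_apply_apply]
          · right; omega
        · rintro (rfl | h)
          · simp [Equiv.apply_symm_apply]
          · omega
      have hnm : e.symm ⟨k+1, hk⟩ ∉ Finset.univ.filter (fun v => (e v : ℕ) ≤ k) := by
        simp [Equiv.apply_symm_apply]
      have hek : (e (e.symm ⟨k+1, hk⟩) : ℕ) = k+1 := by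
        rw [Equiv.apply_symm_apply]
      rw [hins]
      by_cases hD : a (k+1) < a k
      · refine IsThresholdOn.dominating _ _ hnm hprev ?_
        intro u hu
        have hu' : (e u : ℕ) ≤ k := (Finset.mem_filter.mp hu).2
        have hlt : (e u : ℕ) < (e (e.symm ⟨k+1, hk⟩) : ℕ) := by omega
        refine ((hTadj u _ hlt).mpr ?_).symm
        rw [hek]
        simpa using hD
      · refine IsThresholdOn.isolated _ _ hnm hprev ?_
        intro u hu hadj
        have hu' : (e u : ℕ) ≤ k := (Finset.mem_filter.mp hu).2
        have hlt : (e u : ℕ) < (e (e.symm ⟨k+1, hk⟩) : ℕ) := by omega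
        have := (hTadj u _ hlt).mp hadj.symm
        rw [hek] at this
        simp at this
        omega
  have hthr : IsThresholdOn T Finset.univ := by
    have huniv : Finset.univ = Finset.univ.filter (fun v : V => (e v : ℕ) ≤ n - 1) := by
      ext v
      simp only [Finset.mem_filter, Finset.mem_univ, true_and, true_iff]
      have h2 : (e v : ℕ) < n := (e v).isLt
      omega
    rw [huniv]
    exact hfilt (n-1) (by omega)
  refine ⟨T, hthr, ?_⟩
  -- counting
  intro i hi
  set Dgt : V → Finset V := fun m => Finset.univ.filter
    (fun w => (e m : ℕ) < (e w : ℕ) ∧ a (e w : ℕ) < a ((e w : ℕ) - 1)) with hDgt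
  have hchar : ∀ K : Finset V, T.IsClique (↑K : Set V) ↔
      (∀ u ∈ K, ∀ w ∈ K, (e w : ℕ) < (e u : ℕ) → a (e u : ℕ) < a ((e u : ℕ) - 1)) := by
    intro K
    constructor
    · intro hclq u hu w hw hlt
      have hne : w ≠ u := by intro hc; subst hc; omega
      have := hclq hw hu hne
      exact (hTadj w u hlt).mp this
    · intro h
      rw [SimpleGraph.isClique_iff]
      intro u hu w hw hne
      have hene : (e u : ℕ) ≠ (e w : ℕ) := by
        intro hc
        exact hne (e.injective (Fin.ext hc))
      rcases Nat.lt_or_ge (e u : ℕ) (e w : ℕ) with hlt | hge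
      · exact (hTadj u w hlt).mpr (h w hw u hu hlt)
      · have hlt : (e w : ℕ) < (e u : ℕ) := by omega
        exact ((hTadj w u hlt).mpr (h u hu w hw hlt)).symm
  -- the clique count via a bijection
  have hFne : ∀ K : Finset V, K.card = i → (K.image e).Nonempty := by
    intro K hc
    have hne : K.Nonempty := Finset.card_pos.mp (by omega)
    exact hne.image _
  have hcnt : nClq T Finset.univ i =
      ((Finset.univ : Finset V).sigma (fun m => (Dgt m).powersetCard (i-1))).card := by
    rw [nClq_eq_filter]
    refine Finset.card_bij'
      (fun K hK => ⟨e.symm ((K.image e).min' (hFne K (Finset.mem_filter.mp hK).2.1)),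
        K.erase (e.symm ((K.image e).min' (hFne K (Finset.mem_filter.mp hK).2.1)))⟩)
      (fun q _ => insert q.1 q.2) ?_ ?_ ?_ ?_
    · -- forward membership
      intro K hK
      obtain ⟨hKs, hKc, hKclq⟩ : K ⊆ Finset.univ ∧ K.card = i ∧ T.IsClique (↑K : Set V) := by
        have := Finset.mem_filter.mp hK
        exact ⟨Finset.mem_powerset.mp this.1, this.2.1, this.2.2⟩
      set m := e.symm ((K.image e).min' (hFne K (Finset.mem_filter.mp hK).2.1)) with hm
      have hmK : m ∈ K := by
        obtain ⟨v, hv, hev⟩ := Finset.mem_image.mp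
          (Finset.min'_mem (K.image e) (hFne K (Finset.mem_filter.mp hK).2.1))
        rw [hm, ← hev, Equiv.symm_apply_apply]
        exact hv
      rw [Finset.mem_sigma]
      refine ⟨Finset.mem_univ _, ?_⟩
      rw [Finset.mem_powersetCard]
      constructor
      · intro u hu
        obtain ⟨hune, huK⟩ := Finset.mem_erase.mp hu
        have hle : ((K.image e).min' (hFne K (Finset.mem_filter.mp hK).2.1)) ≤ e u :=
          Finset.min'_le _ _ (Finset.mem_image_of_mem e huK)
        have hem : (e m : ℕ) = ((K.image e).min' (hFne K (Finset.mem_filter.mp hK).2.1) : ℕ) := by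
          rw [hm, Equiv.apply_symm_apply]
        have hlt : (e m : ℕ) < (e u : ℕ) := by
          have hne2 : (e u : ℕ) ≠ (e m : ℕ) := by
            intro hc
            exact hune (e.injective (Fin.ext hc))
          have hle' : ((K.image e).min' (hFne K (Finset.mem_filter.mp hK).2.1) : ℕ) ≤ (e u : ℕ) := hle
          omega
        refine Finset.mem_filter.mpr ⟨Finset.mem_univ _, hlt, ?_⟩
        exact (hchar K).mp hKclq u huK m hmK hlt
      · rw [Finset.card_erase_of_mem hmK, hKc]
    · -- backward membership
      intro q hq
      rw [Finset.mem_sigma] at hq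
      obtain ⟨-, hJ⟩ := hq
      rw [Finset.mem_powersetCard] at hJ
      obtain ⟨hJD, hJc⟩ := hJ
      have hmJ : q.1 ∉ q.2 := by
        intro hc
        have hlt := (Finset.mem_filter.mp (hJD hc)).2.1
        exact absurd hlt (lt_irrefl _)
      rw [Finset.mem_filter, Finset.mem_powerset]
      refine ⟨Finset.subset_univ _, ?_, ?_⟩
      · rw [Finset.card_insert_of_notMem hmJ, hJc]; omega
      · rw [hchar]
        intro u hu w hw hlt
        rcases Finset.mem_insert.mp hu with rfl | hu'
        · exfalso
          rcases Finset.mem_insert.mp hw with rfl | hw'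
          · exact absurd hlt (lt_irrefl _)
          · have h2 := (Finset.mem_filter.mp (hJD hw')).2.1
            exact absurd (h2.trans hlt) (lt_irrefl _)
        · exact (Finset.mem_filter.mp (hJD hu')).2.2
    · -- left inverse
      intro K hK
      simp only
      apply Finset.insert_erase
      obtain ⟨v, hv, hev⟩ := Finset.mem_image.mp
        (Finset.min'_mem (K.image e) (hFne K (Finset.mem_filter.mp hK).2.1))
      rw [← hev, Equiv.symm_apply_apply]
      exact hv
    · -- right inverse
      intro q hq
      rw [Finset.mem_sigma] at hq
      obtain ⟨-, hJ⟩ := hq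
      rw [Finset.mem_powersetCard] at hJ
      obtain ⟨hJD, hJc⟩ := hJ
      have hmJ : q.1 ∉ q.2 := by
        intro hc
        have hlt := (Finset.mem_filter.mp (hJD hc)).2.1
        exact absurd hlt (lt_irrefl _)
      have hmin : ∀ hp : ((insert q.1 q.2).image e).Nonempty,
          ((insert q.1 q.2).image e).min' hp = e q.1 := by
        intro hp
        apply le_antisymm
        · exact Finset.min'_le _ _ (Finset.mem_image_of_mem _ (Finset.mem_insert_self _ _))
        · obtain ⟨v, hv, hev⟩ := Finset.mem_image.mp
            (Finset.min'_mem ((insert q.1 q.2).image e) hp)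
          rcases Finset.mem_insert.mp hv with rfl | hv'
          · rw [hev]
          · have hlt := (Finset.mem_filter.mp (hJD hv')).2.1
            rw [← hev]
            exact le_of_lt (by exact hlt)
      have h1 : ∀ hp, e.symm (((insert q.1 q.2).image e).min' hp) = q.1 := by
        intro hp
        rw [hmin hp, Equiv.symm_apply_apply]
      refine Sigma.ext ?_ (heq_of_eq ?_)
      · dsimp only
        exact h1 _
      · dsimp only
        rw [h1 _, Finset.erase_insert hmJ]
  rw [hcnt, Finset.card_sigma]
  have hDcard : ∀ m : V, ((Dgt m).powersetCard (i-1)).card = Nat.choose (a (e m : ℕ)) (i-1) := by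
    intro m
    rw [Finset.card_powersetCard]
    congr 1
    have : (Dgt m).card = ((Finset.range n).filter
        (fun k => (e m : ℕ) < k ∧ a k < a (k-1))).card := by
      refine Finset.card_bij (fun w _ => (e w : ℕ)) ?_ ?_ ?_
      · intro w hw
        obtain ⟨-, h1, h2⟩ := Finset.mem_filter.mp hw
        exact Finset.mem_filter.mpr ⟨Finset.mem_range.mpr (e w).isLt, h1, h2⟩
      · intro w _ w' _ h
        exact e.injective (Fin.ext h)
      · intro k hk
        obtain ⟨hkr, h1, h2⟩ := Finset.mem_filter.mp hk
        rw [Finset.mem_range] at hkr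
        refine ⟨e.symm ⟨k, hkr⟩, ?_, by simp⟩
        refine Finset.mem_filter.mpr ⟨Finset.mem_univ _, ?_, ?_⟩ <;>
          · rw [Equiv.apply_symm_apply]; assumption
    rw [this]
    exact count_steps a n hdesc hstep hlast (e m : ℕ) (e m).isLt
  calc ∑ m : V, ((Dgt m).powersetCard (i-1)).card
      = ∑ m : V, Nat.choose (a (e m : ℕ)) (i-1) := by
        exact Finset.sum_congr rfl (fun m _ => hDcard m)
    _ = ∑ q : Fin n, Nat.choose (a (q : ℕ)) (i-1) := by
        exact Fintype.sum_equiv e _ _ (fun m => rfl)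
    _ = ∑ k ∈ Finset.range n, Nat.choose (a k) (i-1) := by
        exact Fin.sum_univ_eq_sum_range (fun k => Nat.choose (a k) (i-1)) n
    _ = ∑ k ∈ Finset.range n, Nat.choose (l.getD k 0) (i-1) := by
        exact Finset.sum_range_reflect (fun k => Nat.choose (l.getD k 0) (i-1)) n
    _ = (l.map (fun d => Nat.choose d (i-1))).sum := by
        rw [← hlen]
        exact sum_getD l (fun d => Nat.choose d (i-1))
    _ = (L.map (fun d => Nat.choose d (i-1))).sum := by
        rw [← hLl]
        simp [Multiset.map_coe]


lemma cliqueCount_eq_nClq [Fintype V] (X : SimpleGraph V) (i : ℕ) :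
    cliqueCount X i = nClq X Finset.univ i := by
  unfold cliqueCount nClq
  congr 1
  ext K
  simp [SimpleGraph.isNClique_iff, and_comm]

end Stmt10Aux

/-- Every non-complete chordal graph `G` admits a threshold graph `T` on the same vertex
set having the same number of cliques of each cardinality `i ≥ 1`; in particular `G` and
`T` have the same clique vector and the same `b`-vector. -/
theorem stmt10 {V : Type} [Fintype V] [DecidableEq V] (G : SimpleGraph V)
    (hnc : G ≠ ⊤) (hch : IsChordal G) :
    ∃ T : SimpleGraph V, IsThreshold T ∧
      ∀ i : ℕ, 1 ≤ i → cliqueCount T i = cliqueCount G i := by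
  classical
  have hVne : Nonempty V := by
    by_contra h
    rw [not_nonempty_iff] at h
    apply hnc
    ext u v
    exact (h.false u).elim
  obtain ⟨L, hLcard, hLcnt, hLdc, -⟩ := Stmt10Aux.chordal_counts hch Finset.univ
  have hcardV : Fintype.card V = Multiset.card L := by
    rw [hLcard, Finset.card_univ]
  have hpos : 0 < Multiset.card L := by
    rw [← hcardV]
    exact Fintype.card_pos
  obtain ⟨T, hthr, hTcnt⟩ := Stmt10Aux.threshold_exists L hLdc hcardV hpos
  refine ⟨T, hthr, ?_⟩
  intro i hi
  rw [Stmt10Aux.cliqueCount_eq_nClq T i, Stmt10Aux.cliqueCount_eq_nClq G i,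
    hTcnt i hi, hLcnt i hi]
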